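/- For each κ ∈ (0,1), the function f_κ(p) := κ p^(κ−1) is a calibrator: for any p-variable P, E[κ P^(κ−1)] ≤ 1. -/

import Mathlib

open MeasureTheory Set
open scoped ENNReal NNReal

/-- For each `κ ∈ (0,1)`, `f_κ(p) := κ p^(κ−1)` is a calibrator:
for any p-variable `P`, `E[κ P^(κ−1)] ≤ 1`. (Computed in `[0,∞]`, so `0^(κ-1) = ∞`.) -/
theorem kappa_power_is_calibrator
    {Ω : Type*} [MeasurableSpace Ω] (Q : Measure Ω) [IsProbabilityMeasure Q]
    (κ : ℝ) (hκ : κ ∈ Set.Ioo (0:ℝ) 1)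
    (P : Ω → ℝ) (hPmeas : Measurable P) (hP01 : ∀ ω, P ω ∈ Set.Icc (0:ℝ) 1)
    (hP : ∀ ε ∈ Set.Ioo (0:ℝ) 1, Q {ω | P ω ≤ ε} ≤ ENNReal.ofReal ε) :
    ∫⁻ ω, ENNReal.ofReal κ * (ENNReal.ofReal (P ω)) ^ (κ - 1) ∂Q ≤ 1 := by
  obtain ⟨hκ0, hκ1⟩ := hκ
  have h1κ : (0:ℝ) < 1 - κ := by linarith
  set a : ℝ := (1 - κ)⁻¹ with ha_def
  have ha0 : 0 < a := inv_pos.mpr h1κ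
  have ha1 : 1 < a := (one_lt_inv_iff₀).mpr ⟨h1κ, by linarith⟩
  set f : Ω → ℝ := fun ω => κ * (P ω) ^ (κ - 1) with hf_def
  have hf_nn : ∀ ω, 0 ≤ f ω := fun ω =>
    mul_nonneg hκ0.le (Real.rpow_nonneg (hP01 ω).1 _)
  have hf_meas : Measurable f := by fun_prop
  -- a.e., P ω > 0
  have hP0 : Q {ω | P ω ≤ 0} = 0 := by
    refine le_antisymm ?_ (zero_le ..)
    refine ENNReal.le_of_forall_pos_le_add fun ε hε _ => ?_
    rw [zero_add]
    set δ : ℝ := min (ε : ℝ) (1/2) with hδdef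
    have hδ : δ ∈ Ioo (0:ℝ) 1 :=
      ⟨lt_min (by exact_mod_cast hε) (by norm_num),
        (min_le_right _ _).trans_lt (by norm_num)⟩
    calc Q {ω | P ω ≤ 0} ≤ Q {ω | P ω ≤ δ} :=
          measure_mono fun ω h => h.trans hδ.1.le
      _ ≤ ENNReal.ofReal δ := hP δ hδ
      _ ≤ (ε : ℝ≥0∞) := by
          rw [← ENNReal.ofReal_coe_nnreal]
          exact ENNReal.ofReal_le_ofReal (min_le_left _ _)
  -- rewrite the integrand a.e.
  have hae : ∀ᵐ ω ∂Q,
      ENNReal.ofReal κ * (ENNReal.ofReal (P ω)) ^ (κ - 1) = ENNReal.ofReal (f ω) := by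
    have : ∀ᵐ ω ∂Q, 0 < P ω := by
      rw [ae_iff]
      simpa [not_lt] using hP0
    filter_upwards [this] with ω hω
    rw [hf_def, ENNReal.ofReal_mul hκ0.le, ENNReal.ofReal_rpow_of_pos hω]
  rw [lintegral_congr_ae hae,
    lintegral_eq_lintegral_meas_lt Q (Filter.Eventually.of_forall hf_nn) hf_meas.aemeasurable]
  -- split the domain
  have hsplit : (Ioi (0:ℝ)) = Ioc 0 κ ∪ Ioi κ := (Ioc_union_Ioi_eq_Ioi hκ0.le).symm
  rw [hsplit, lintegral_union measurableSet_Ioi (Ioc_disjoint_Ioi le_rfl)]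
  have hbound1 : ∫⁻ t in Ioc (0:ℝ) κ, Q {ω | t < f ω} ≤ ENNReal.ofReal κ := by
    calc ∫⁻ t in Ioc (0:ℝ) κ, Q {ω | t < f ω}
        ≤ ∫⁻ _ in Ioc (0:ℝ) κ, 1 := setLIntegral_mono measurable_const fun t _ => prob_le_one
      _ = ENNReal.ofReal κ := by
          simp [Real.volume_Ioc]
  have hbound2 : ∫⁻ t in Ioi κ, Q {ω | t < f ω} ≤ ENNReal.ofReal (1 - κ) := by
    have key : ∀ t ∈ Ioi κ, Q {ω | t < f ω} ≤ ENNReal.ofReal (κ ^ a * t ^ (-a)) := by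
      intro t ht
      have ht0 : 0 < t := hκ0.trans ht
      set s : ℝ := (κ / t) ^ a with hs_def
      have hκt : κ / t < 1 := (div_lt_one ht0).mpr ht
      have hκt0 : 0 < κ / t := div_pos hκ0 ht0
      have hs0 : 0 < s := Real.rpow_pos_of_pos hκt0 _
      have hs1 : s < 1 := Real.rpow_lt_one hκt0.le hκt ha0
      have hsub : {ω | t < f ω} ⊆ {ω | P ω ≤ s} := by
        intro ω hω
        simp only [mem_setOf_eq] at hω ⊢
        by_contra hc
        push_neg at hc
        have hPω : (P ω) ^ (κ - 1) ≤ s ^ (κ - 1) :=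
          Real.rpow_le_rpow_of_nonpos hs0 hc.le (by linarith)
        have hs_calc : s ^ (κ - 1) = t / κ := by
          rw [hs_def, ← Real.rpow_mul hκt0.le]
          have hexp : a * (κ - 1) = -1 := by
            rw [ha_def]; field_simp; ring
          rw [hexp, Real.rpow_neg_one, inv_div]
        have : f ω ≤ t := by
          rw [hf_def]
          calc κ * (P ω) ^ (κ - 1) ≤ κ * (t / κ) := by
                rw [← hs_calc]; exact mul_le_mul_of_nonneg_left hPω hκ0.le
            _ = t := by field_simp
        exact absurd hω (not_lt.mpr this)
      calc Q {ω | t < f ω} ≤ Q {ω | P ω ≤ s} := measure_mono hsub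
        _ ≤ ENNReal.ofReal s := hP s ⟨hs0, hs1⟩
        _ = ENNReal.ofReal (κ ^ a * t ^ (-a)) := by
            rw [hs_def, Real.div_rpow hκ0.le ht0.le, Real.rpow_neg ht0.le, div_eq_mul_inv]
    calc ∫⁻ t in Ioi κ, Q {ω | t < f ω}
        ≤ ∫⁻ t in Ioi κ, ENNReal.ofReal (κ ^ a * t ^ (-a)) :=
          setLIntegral_mono (by fun_prop) key
      _ = ENNReal.ofReal (∫ t in Ioi κ, κ ^ a * t ^ (-a)) := by
          rw [← ofReal_integral_eq_lintegral_ofReal]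
          · exact (integrableOn_Ioi_rpow_of_lt (by linarith) hκ0).const_mul _
          · filter_upwards [ae_restrict_mem measurableSet_Ioi] with t ht
            exact mul_nonneg (Real.rpow_nonneg hκ0.le _)
              (Real.rpow_nonneg (hκ0.trans ht).le _)
      _ = ENNReal.ofReal (1 - κ) := by
          congr 1
          rw [MeasureTheory.integral_const_mul, integral_Ioi_rpow_of_lt (by linarith) hκ0]
          have hκa : κ ^ a * κ ^ (-a + 1) = κ := by
            rw [← Real.rpow_add hκ0]; norm_num
          have ha2 : a - 1 = κ / (1 - κ) := by
            rw [ha_def]; field_simp; ring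
          
          calc κ ^ a * (-κ ^ (-a + 1) / (-a + 1))
              = (κ ^ a * κ ^ (-a + 1)) / (a - 1) := by
                rw [show (-a + 1) = -(a - 1) by ring, neg_div_neg_eq, mul_div_assoc]
            _ = κ / (κ / (1 - κ)) := by rw [hκa, ha2]
            _ = 1 - κ := by
                rw [div_div_eq_mul_div, mul_comm, mul_div_assoc, div_self hκ0.ne', mul_one]
  calc (∫⁻ t in Ioc (0:ℝ) κ, Q {ω | t < f ω}) + ∫⁻ t in Ioi κ, Q {ω | t < f ω}
      ≤ ENNReal.ofReal κ + ENNReal.ofReal (1 - κ) := add_le_add hbound1 hbound2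
    _ = 1 := by
        rw [← ENNReal.ofReal_add hκ0.le h1κ.le]
        norm_num
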